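/- arXiv:1305.3137 — 2 statements merged into one kernel-verified Lean document; each statement's English description precedes it below -/
import Mathlib

section
/- An affine Cartan matrix of size n×n has rank exactly n−1. -/
/-- An `n × n` integer matrix is an (indecomposable) affine Cartan matrix if its diagonal
entries are 2, off-diagonal entries are nonpositive, `A i j = 0 ↔ A j i = 0`, there is a
componentwise strictly positive vector `v` with `A.mulVec v = 0`, and the index set admits
no partition into two nonempty mutually "orthogonal" blocks. -/
def IsIndecAffineCartan {n : ℕ} (A : Matrix (Fin n) (Fin n) ℤ) : Prop :=
  (∀ i, A i i = 2) ∧ (∀ i j, i ≠ j → A i j ≤ 0) ∧ (∀ i j, A i j = 0 ↔ A j i = 0) ∧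
  (∃ v : Fin n → ℚ, (∀ i, 0 < v i) ∧ (A.map (Int.cast : ℤ → ℚ)).mulVec v = 0) ∧
  (∀ s : Set (Fin n), s.Nonempty → sᶜ.Nonempty → ∃ i ∈ s, ∃ j ∈ sᶜ, A i j ≠ 0)

/-- An indecomposable affine Cartan matrix of size `n × n` has rank exactly `n - 1`. -/
theorem affine_cartan_rank {n : ℕ} (hn : 0 < n) (A : Matrix (Fin n) (Fin n) ℤ)
    (hA : IsIndecAffineCartan A) :
    (A.map (Int.cast : ℤ → ℚ)).rank = n - 1 := by
  obtain ⟨hdiag, hoff, hsym, ⟨v, hvpos, hv0⟩, hind⟩ := hA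
  set B := A.map (Int.cast : ℤ → ℚ) with hB
  have hne : Nonempty (Fin n) := Fin.pos_iff_nonempty.mp hn
  -- key: kernel is spanned by v
  have hker : ∀ w : Fin n → ℚ, B.mulVec w = 0 → ∃ c : ℚ, w = c • v := by
    intro w hw
    obtain ⟨i0, -, hi0⟩ := Finset.exists_mem_eq_sup' (Finset.univ_nonempty (α := Fin n))
      (fun i => w i / v i)
    have hmax : ∀ i, w i / v i ≤ w i0 / v i0 := fun i =>
      hi0 ▸ Finset.le_sup' (fun i => w i / v i) (Finset.mem_univ i)
    set c : ℚ := w i0 / v i0 with hc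
    refine ⟨c, ?_⟩
    set u : Fin n → ℚ := c • v - w with hu
    have hunneg : ∀ i, 0 ≤ u i := by
      intro i
      have h2 := (div_le_iff₀ (hvpos i)).mp (hmax i)
      simp only [hu, Pi.sub_apply, Pi.smul_apply, smul_eq_mul]
      linarith
    have huker : B.mulVec u = 0 := by
      simp [hu, Matrix.mulVec_sub, Matrix.mulVec_smul, hv0, hw]
    have hi0' : u i0 = 0 := by
      have hcv : c * v i0 = w i0 := by
        rw [hc]; exact div_mul_cancel₀ _ (hvpos i0).ne'
      simp [hu, hcv]
    have hclosed : ∀ i, u i = 0 → ∀ j, A i j ≠ 0 → u j = 0 := by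
      intro i hi j hj
      have hsum : ∑ k, B i k * u k = 0 := by
        have := congrFun huker i
        simpa [Matrix.mulVec, dotProduct] using this
      have hterm : ∀ k ∈ Finset.univ, B i k * u k ≤ 0 := by
        intro k _
        rcases eq_or_ne k i with rfl | hk
        · simp [hi]
        · have hle : A i k ≤ 0 := hoff i k (Ne.symm hk)
          have hb : B i k ≤ 0 := by
            simp only [hB, Matrix.map_apply]
            exact_mod_cast hle
          exact mul_nonpos_of_nonpos_of_nonneg hb (hunneg k)
      have hzero := (Finset.sum_eq_zero_iff_of_nonpos hterm).mp hsum j (Finset.mem_univ j)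
      have hbj : B i j ≠ 0 := by
        simp only [hB, Matrix.map_apply]
        exact_mod_cast hj
      rcases mul_eq_zero.mp hzero with h | h
      · exact absurd h hbj
      · exact h
    have hall : u = 0 := by
      funext i
      by_contra hcon
      have hs1 : ({i | u i = 0} : Set (Fin n)).Nonempty := ⟨i0, hi0'⟩
      have hs2 : ({i | u i = 0} : Set (Fin n))ᶜ.Nonempty := ⟨i, hcon⟩
      obtain ⟨a, ha, b, hb, hab⟩ := hind _ hs1 hs2
      exact hb (hclosed a ha b hab)
    have := sub_eq_zero.mp hall
    exact this.symm
  have hvne : v ≠ 0 := fun h => (hvpos ⟨0, hn⟩).ne' (by simp [h])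
  have hkereq : LinearMap.ker B.mulVecLin = Submodule.span ℚ {v} := by
    apply le_antisymm
    · intro w hw
      obtain ⟨c, rfl⟩ := hker w (by simpa using hw)
      exact Submodule.smul_mem _ _ (Submodule.mem_span_singleton_self v)
    · rw [Submodule.span_le, Set.singleton_subset_iff]
      simp [LinearMap.mem_ker, Matrix.mulVecLin_apply, hv0]
  have hfk : Module.finrank ℚ (LinearMap.ker B.mulVecLin) = 1 := by
    rw [hkereq]; exact finrank_span_singleton hvne
  have hrn := LinearMap.finrank_range_add_finrank_ker B.mulVecLin
  rw [hfk, Module.finrank_fin_fun] at hrn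
  have : B.rank = Module.finrank ℚ (LinearMap.range B.mulVecLin) := rfl
  omega
end

section
/- If A is an indecomposable affine Cartan matrix and v > 0 is a componentwise positive vector with Av = 0, then any vector w with Aw = 0 is a scalar multiple of v; i.e., the kernel of A is one-dimensional. -/
/-- If `A` is an indecomposable affine Cartan matrix and `v > 0` satisfies `A v = 0`, then
every vector in the kernel of `A` is a scalar multiple of `v`: the kernel is
one-dimensional. -/
theorem affine_cartan_kernel_one_dimensional {n : ℕ} (A : Matrix (Fin n) (Fin n) ℤ)
    (hA : IsIndecAffineCartan A) (v : Fin n → ℚ) (hv : ∀ i, 0 < v i)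
    (hAv : (A.map (Int.cast : ℤ → ℚ)).mulVec v = 0)
    (w : Fin n → ℚ) (hw : (A.map (Int.cast : ℤ → ℚ)).mulVec w = 0) :
    ∃ c : ℚ, w = c • v := by
  obtain ⟨hdiag, hoff, hsym, -, hind⟩ := hA
  rcases Nat.eq_zero_or_pos n with hn | hn
  · exact ⟨0, funext fun i => absurd i.2 (by omega)⟩
  have hne : (Finset.univ : Finset (Fin n)).Nonempty := by
    have : Nonempty (Fin n) := Fin.pos_iff_nonempty.mp hn
    exact Finset.univ_nonempty
  obtain ⟨i0, -, hi0⟩ := Finset.exists_max_image Finset.univ (fun i => w i / v i) hne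
  set c := w i0 / v i0 with hc
  set u : Fin n → ℚ := fun i => c * v i - w i with hu
  have hupos : ∀ k, 0 ≤ u k := by
    intro k
    have h1 := hi0 k (Finset.mem_univ k)
    have h2 : w k ≤ c * v k := by
      rw [div_le_div_iff₀ (hv k) (hv i0)] at h1
      rw [hc, div_mul_eq_mul_div, le_div_iff₀ (hv i0)]
      linarith
    simp only [hu]
    linarith
  have hui0 : u i0 = 0 := by
    simp only [hu, hc]
    rw [div_mul_cancel₀ _ (hv i0).ne', sub_self]
  have hAu : ∀ j, ∑ k, (A j k : ℚ) * u k = 0 := by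
    intro j
    have h1 := congrFun hAv j
    have h2 := congrFun hw j
    simp only [Matrix.mulVec, dotProduct, Matrix.map_apply, Pi.zero_apply] at h1 h2
    simp only [hu, mul_sub, Finset.sum_sub_distrib, mul_left_comm]
    rw [← Finset.mul_sum, h1, h2, mul_zero, sub_zero]
  -- closure property of the zero set of u
  have hclosed : ∀ j, u j = 0 → ∀ k, A j k ≠ 0 → u k = 0 := by
    intro j hj k hAk
    have hsum := hAu j
    have hterm : ∀ m ∈ Finset.univ, (A j m : ℚ) * u m ≤ 0 := by
      intro m _
      rcases eq_or_ne j m with rfl | hjm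
      · rw [hj, mul_zero]
      · have := hoff j m hjm
        have := hupos m
        have : (A j m : ℚ) ≤ 0 := by exact_mod_cast hoff j m hjm
        nlinarith [hupos m]
    have hall := (Finset.sum_eq_zero_iff_of_nonpos hterm).mp hsum k (Finset.mem_univ k)
    have hA' : (A j k : ℚ) ≠ 0 := by exact_mod_cast hAk
    exact (mul_eq_zero.mp hall).resolve_left hA'
  -- the zero set of u is everything
  have hall : ∀ k, u k = 0 := by
    by_contra h
    push_neg at h
    obtain ⟨k0, hk0⟩ := h
    set s : Set (Fin n) := {i | u i = 0} with hs
    have hsne : s.Nonempty := ⟨i0, hui0⟩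
    have hscne : sᶜ.Nonempty := ⟨k0, hk0⟩
    obtain ⟨i, hi, j, hj, hij⟩ := hind s hsne hscne
    exact hj (hclosed i hi j hij)
  refine ⟨c, funext fun k => ?_⟩
  have := hall k
  simp only [hu] at this
  simp only [Pi.smul_apply, smul_eq_mul]
  linarith
end
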